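/- Let H be an infinite-dimensional complex Hilbert space and let B be a quasipoint in the lattice L(H) of closed subspaces of H. Then B contains no nonzero finite-dimensional subspace if and only if every closed subspace of finite codimension (i.e. every U ∈ L(H) whose orthogonal complement is finite-dimensional) belongs to B. -/

import Mathlib

/-- The lattice `L(H)` of closed (linear) subspaces of a Hilbert space `H`. -/
def ClosedSubspace (H : Type*) [NormedAddCommGroup H] [InnerProductSpace ℂ H] : Type _ :=
  {U : Submodule ℂ H // IsClosed (U : Set H)}

/-- The zero subspace, as an element of `L(H)`. -/
def zeroCS (H : Type*) [NormedAddCommGroup H] [InnerProductSpace ℂ H] :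
    ClosedSubspace H :=
  ⟨⊥, by rw [Submodule.bot_coe]; exact isClosed_singleton⟩

/-- A quasipoint of `L(H)`: a nonempty set of closed subspaces not containing
the zero subspace, downward directed (for `U, V ∈ B` there is `W ∈ B` with
`W ⊆ U ∩ V`), and maximal among subsets with these properties. -/
def IsQuasipointCS {H : Type*} [NormedAddCommGroup H] [InnerProductSpace ℂ H]
    (B : Set (ClosedSubspace H)) : Prop :=
  B.Nonempty ∧ zeroCS H ∉ B ∧
  (∀ U ∈ B, ∀ V ∈ B, ∃ W ∈ B, W.1 ≤ U.1 ⊓ V.1) ∧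
  ∀ C : Set (ClosedSubspace H), zeroCS H ∉ C →
    (∀ U ∈ C, ∀ V ∈ C, ∃ W ∈ C, W.1 ≤ U.1 ⊓ V.1) → B ⊆ C → B = C

/-- If `W ⊓ U = ⊥` and `Uᗮ` is finite-dimensional (`U` closed), then `W` is
finite-dimensional. -/
lemma findim_of_inf_bot {H : Type*} [NormedAddCommGroup H] [InnerProductSpace ℂ H]
    [CompleteSpace H] (U W : Submodule ℂ H) (hU : IsClosed (U : Set H))
    (hfin : FiniteDimensional ℂ (Uᗮ)) (h : W ⊓ U = ⊥) :
    FiniteDimensional ℂ W := by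
  haveI : CompleteSpace U := hU.completeSpace_coe
  let f : W →ₗ[ℂ] Uᗮ := (Submodule.orthogonalProjection Uᗮ).toLinearMap.domRestrict W
  have hinj : Function.Injective f := by
    rw [← LinearMap.ker_eq_bot]
    ext ⟨x, hx⟩
    simp only [LinearMap.mem_ker, Submodule.mem_bot, f, LinearMap.domRestrict_apply]
    constructor
    · intro hx0
      have hx0' : Submodule.orthogonalProjection Uᗮ x = 0 := hx0
      have : x ∈ Uᗮᗮ := by
        rwa [Submodule.orthogonalProjectionOnto_eq_zero_iff] at hx0'
      rw [Submodule.orthogonal_orthogonal] at this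
      have : x ∈ W ⊓ U := ⟨hx, this⟩
      rw [h] at this
      exact Subtype.ext this
    · intro hx0
      have : x = 0 := congrArg Subtype.val hx0
      simp [this]
  exact FiniteDimensional.of_injective f hinj

/-- Let `H` be infinite-dimensional. A quasipoint `B` of `L(H)` contains no
nonzero finite-dimensional subspace if and only if every closed subspace of
finite codimension (finite-dimensional orthogonal complement) belongs to `B`. -/
theorem stmt4 {H : Type*} [NormedAddCommGroup H] [InnerProductSpace ℂ H]
    [CompleteSpace H] (hdim : ¬ FiniteDimensional ℂ H)
    (B : Set (ClosedSubspace H)) (hB : IsQuasipointCS B) :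
    (¬ ∃ U ∈ B, U.1 ≠ ⊥ ∧ FiniteDimensional ℂ U.1) ↔
    ∀ U : ClosedSubspace H, FiniteDimensional ℂ (U.1ᗮ) → U ∈ B := by
  obtain ⟨hne, hzero, hdir, hmax⟩ := hB
  constructor
  · -- no nonzero finite-dim element → all finite-codim subspaces in B
    intro hno U hUfin
    -- enlarge B by all V containing some W ⊓ U with W ∈ B
    set C : Set (ClosedSubspace H) :=
      {V | ∃ W ∈ B, W.1 ⊓ U.1 ≤ V.1} with hC
    have hWU : ∀ W ∈ B, W.1 ⊓ U.1 ≠ ⊥ := by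
      intro W hW hbot
      exact hno ⟨W, hW, fun hWbot => hzero (by
          have : W = zeroCS H := Subtype.ext hWbot
          rwa [this] at hW),
        findim_of_inf_bot U.1 W.1 U.2 hUfin hbot⟩
    have hzC : zeroCS H ∉ C := by
      rintro ⟨W, hW, hle⟩
      exact hWU W hW (le_bot_iff.mp hle)
    have hdirC : ∀ V₁ ∈ C, ∀ V₂ ∈ C, ∃ V ∈ C, V.1 ≤ V₁.1 ⊓ V₂.1 := by
      rintro V₁ ⟨W₁, hW₁, h₁⟩ V₂ ⟨W₂, hW₂, h₂⟩
      obtain ⟨W, hW, hle⟩ := hdir W₁ hW₁ W₂ hW₂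
      refine ⟨⟨W.1 ⊓ U.1, ?_⟩, ⟨W, hW, le_rfl⟩, ?_⟩
      · exact W.2.inter U.2
      · exact le_inf
          (le_trans (inf_le_inf_right _ (hle.trans inf_le_left)) h₁)
          (le_trans (inf_le_inf_right _ (hle.trans inf_le_right)) h₂)
    have hBC : B ⊆ C := fun W hW => ⟨W, hW, inf_le_left⟩
    have := hmax C hzC hdirC hBC
    rw [this]
    obtain ⟨W, hW⟩ := hne
    exact ⟨W, hW, inf_le_right⟩
  · -- all finite-codim subspaces in B → no nonzero finite-dim element
    rintro hall ⟨U, hU, hUne, hUfin⟩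
    haveI : CompleteSpace U.1 := U.2.completeSpace_coe
    have hperp : FiniteDimensional ℂ ((U.1ᗮ)ᗮ) := by
      rw [Submodule.orthogonal_orthogonal]; exact hUfin
    have hUperp : (⟨U.1ᗮ, Submodule.isClosed_orthogonal U.1⟩ : ClosedSubspace H) ∈ B :=
      hall _ hperp
    obtain ⟨W, hW, hle⟩ := hdir U hU _ hUperp
    have : W.1 ≤ ⊥ := by
      have hd : U.1 ⊓ U.1ᗮ = ⊥ := (Submodule.orthogonal_disjoint U.1).eq_bot
      rwa [hd] at hle
    have : W = zeroCS H := Subtype.ext (le_bot_iff.mp this)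
    rw [this] at hW
    exact hzero hW
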